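/- Define v̂((x,X),(y,Y)) := β_x( ṽ(X,y) ). Then for all x, y, z ∈ G₁ and X, Y, Z ∈ G₂: v̂(xX, yY) * v̂(xyXY, zZ) * ( v̂(xX, yzYZ) )⁻¹ = φ(X,y,z)³ • β_x( β_X( v̂(yY, zZ) ) ). Thus v̂ satisfies a deformed cocycle condition whose obstruction is the three-cocycle varφ(xX, yY, zZ) = φ(X,y,z)³, whose antisymmetrisation is the original cocycle φ. -/

import Mathlib

section aux

variable {A : Type*} [Monoid A] [StarMul A]

lemma vhat_aux_cancel₁ (u : unitary A) (a : A) :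
    star (u : A) * ((u : A) * a) = a := by
  rw [← mul_assoc, Unitary.star_mul_self_of_mem u.prop, one_mul]

lemma vhat_aux_cancel₂ (u : unitary A) (a : A) :
    (u : A) * (star (u : A) * a) = a := by
  rw [← mul_assoc, Unitary.mul_star_self_of_mem u.prop, one_mul]

end aux

/-- **setting of Theorem 8.1.**  With `(β, v, φ, ṽ)` as in Theorem 8.1,
define `v̂((x,X),(y,Y)) := β_x(ṽ(X,y))`.  Then
`v̂(xX,yY) * v̂(xyXY,zZ) * (v̂(xX,yzYZ))⁻¹ = φ(X,y,z)³ • β_x(β_X(v̂(yY,zZ)))`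
(the inverse of the unitary `v̂(xX,yzYZ)` being its adjoint): `v̂` satisfies a deformed
cocycle condition with obstruction three-cocycle `varφ(xX,yY,zZ) = φ(X,y,z)³`. -/
theorem vhat_deformed_cocycle
    {A : Type*} [NormedRing A] [StarRing A] [CStarRing A] [NormedAlgebra ℂ A]
    [CompleteSpace A] [StarModule ℂ A]
    {G₁ G₂ : Type*} [CommGroup G₁] [CommGroup G₂]
    (β : G₁ × G₂ → (A ≃⋆ₐ[ℂ] A)) (v : G₁ × G₂ → G₁ × G₂ → unitary A)
    (htw : ∀ ξ η (a : A), β ξ (β η a) = (v ξ η : A) * β (ξ * η) a * star ((v ξ η : A)))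
    (φ : G₁ × G₂ → G₁ × G₂ → G₁ × G₂ → ℂ)
    (hφabs : ∀ ξ η ζ, ‖φ ξ η ζ‖ = 1)
    (hmul₁ : ∀ ξ ξ' η ζ, φ (ξ * ξ') η ζ = φ ξ η ζ * φ ξ' η ζ)
    (hmul₂ : ∀ ξ η η' ζ, φ ξ (η * η') ζ = φ ξ η ζ * φ ξ η' ζ)
    (hmul₃ : ∀ ξ η ζ ζ', φ ξ η (ζ * ζ') = φ ξ η ζ * φ ξ η ζ')
    (hswap₁₂ : ∀ ξ η ζ, φ η ξ ζ = (φ ξ η ζ)⁻¹)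
    (hswap₂₃ : ∀ ξ η ζ, φ ξ ζ η = (φ ξ η ζ)⁻¹)
    (hcoc : ∀ ξ η ζ, (v ξ η : A) * (v (ξ * η) ζ : A)
      = φ ξ η ζ • (β ξ ((v η ζ : A)) * (v ξ (η * ζ) : A)))
    (hv₁ : ∀ x y : G₁, v (x, 1) (y, 1) = 1)
    (hv₂ : ∀ X Y : G₂, v ((1 : G₁), X) (1, Y) = 1)
    (hφG₁ : ∀ x y z : G₁, φ (x, 1) (y, 1) (z, 1) = 1)
    (hφG₂ : ∀ (ξ : G₁ × G₂) (X Y : G₂),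
      φ ξ ((1 : G₁), X) (1, Y) = 1 ∧ φ ((1 : G₁), X) ξ (1, Y) = 1 ∧
        φ ((1 : G₁), X) ((1 : G₁), Y) ξ = 1)
    (vt : G₁ × G₂ → G₁ × G₂ → A)
    (hvt : ∀ ξ η, vt ξ η = (v ξ η : A) * star ((v η ξ : A)))
    (vh : G₁ × G₂ → G₁ × G₂ → A)
    (hvh : ∀ ξ η, vh ξ η = β (ξ.1, 1) (vt ((1 : G₁), ξ.2) (η.1, 1))) :
    ∀ (x y z : G₁) (X Y Z : G₂),
      vh (x, X) (y, Y) * vh (x * y, X * Y) (z, Z) * star (vh (x, X) (y * z, Y * Z))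
        = (φ ((1 : G₁), X) (y, 1) (z, 1)) ^ (3 : ℕ) •
            β (x, 1) (β ((1 : G₁), X) (vh (y, Y) (z, Z))) := by
  intro x y z X Y Z
  -- scalar facts
  have hφne : ∀ ξ η ζ, φ ξ η ζ ≠ 0 := by
    intro ξ η ζ h
    have h2 := hφabs ξ η ζ
    rw [h] at h2
    simp at h2
  have hφstar : ∀ ξ η ζ, star (φ ξ η ζ) = (φ ξ η ζ)⁻¹ := by
    intro ξ η ζ
    have h1 : φ ξ η ζ * star (φ ξ η ζ) = 1 := by
      rw [Complex.star_def, Complex.mul_conj]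
      norm_cast
      rw [Complex.normSq_eq_norm_sq, hφabs]
      norm_num
    rw [mul_comm] at h1
    exact eq_inv_of_mul_eq_one_left h1
  -- the action of G₁ is untwisted
  have hβ11 : ∀ (a b : G₁) (c : A), β (a, (1:G₂)) (β (b, (1:G₂)) c) = β (a*b, (1:G₂)) c := by
    intro a b c
    rw [htw (a,1) (b,1) c, hv₁]
    simp [Prod.mk_mul_mk]
  -- cancellation with β-images of unitaries
  have cbs : ∀ (σ : G₁ × G₂) (u : unitary A) (a : A),
      star (β σ (u : A)) * (β σ (u : A) * a) = a := by
    intro σ u a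
    rw [← mul_assoc, ← map_star, ← map_mul, Unitary.star_mul_self_of_mem u.prop, map_one,
      one_mul]
  -- cocycle instances
  have I1 : (v (1,X) (y,1) : A) * (v (y,X) (z,1) : A)
      = φ (1,X) (y,1) (z,1) • (v (1,X) (y*z,1) : A) := by
    have h0 := hcoc (1,X) (y,1) (z,1)
    simp only [Prod.mk_mul_mk, one_mul, mul_one] at h0
    rw [hv₁ y z] at h0
    simpa using h0
  have I2 : (v (y*z,1) (1,X) : A)
      = φ (y,1) (z,1) (1,X) • (β (y,(1:G₂)) (v (z,1) (1,X) : A) * (v (y,1) (z,X) : A)) := by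
    have h0 := hcoc (y,1) (z,1) (1,X)
    simp only [Prod.mk_mul_mk, one_mul, mul_one] at h0
    rw [hv₁ y z] at h0
    simpa using h0
  have I3 : (v (y,1) (1,X) : A) * (v (y,X) (z,1) : A)
      = φ (y,1) (1,X) (z,1) • (β (y,(1:G₂)) (v (1,X) (z,1) : A) * (v (y,1) (z,X) : A)) := by
    have h0 := hcoc (y,1) (1,X) (z,1)
    simp only [Prod.mk_mul_mk, one_mul, mul_one] at h0
    exact h0
  have I4 : (v (1,X*Y) (z,1) : A)
      = β ((1:G₁),X) (v (1,Y) (z,1) : A) * (v (1,X) (z,Y) : A) := by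
    have h0 := hcoc (1,X) (1,Y) (z,1)
    simp only [Prod.mk_mul_mk, one_mul, mul_one] at h0
    rw [hv₂ X Y, (hφG₂ (z,1) X Y).2.2] at h0
    simpa using h0
  have I5 : (v (z,1) (1,X) : A) * (v (z,X) (1,Y) : A) = (v (z,1) (1,X*Y) : A) := by
    have h0 := hcoc (z,1) (1,X) (1,Y)
    simp only [Prod.mk_mul_mk, one_mul, mul_one] at h0
    rw [hv₂ X Y, (hφG₂ (z,1) X Y).1] at h0
    simpa using h0
  have I6 : (v (1,X) (z,1) : A) * (v (z,X) (1,Y) : A)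
      = β ((1:G₁),X) (v (z,1) (1,Y) : A) * (v (1,X) (z,Y) : A) := by
    have h0 := hcoc (1,X) (z,1) (1,Y)
    simp only [Prod.mk_mul_mk, one_mul, mul_one] at h0
    rw [(hφG₂ (z,1) X Y).2.1] at h0
    simpa using h0
  -- K1 : ṽ(XY,z) = β_X(ṽ(Y,z)) * ṽ(X,z)
  have hfg : (v (1,X) (z,Y) : A) * star (v (z,X) (1,Y) : A)
      = star (β ((1:G₁),X) (v (z,1) (1,Y) : A)) * (v (1,X) (z,1) : A) := by
    have h1 : β ((1:G₁),X) (v (z,1) (1,Y) : A)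
        * ((v (1,X) (z,Y) : A) * star (v (z,X) (1,Y) : A)) = (v (1,X) (z,1) : A) := by
      rw [← mul_assoc, ← I6, mul_assoc, Unitary.mul_star_self_of_mem (v (z,X) (1,Y)).prop,
        mul_one]
    rw [← h1, cbs]
  have K1 : (v (1,X*Y) (z,1) : A) * star (v (z,1) (1,X*Y) : A)
      = β ((1:G₁),X) ((v (1,Y) (z,1) : A) * star (v (z,1) (1,Y) : A))
        * ((v (1,X) (z,1) : A) * star (v (z,1) (1,X) : A)) := by
    rw [I4, ← I5, map_mul, map_star, star_mul]
    simp only [mul_assoc]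
    congr 1
    rw [← mul_assoc, hfg, mul_assoc]
  -- star of v(X,yz)
  have hsc1 : star (v (1,X) (y*z,1) : A)
      = φ (1,X) (y,1) (z,1) • (star (v (y,X) (z,1) : A) * star (v (1,X) (y,1) : A)) := by
    have h1 := congrArg star I1
    rw [star_mul, star_smul, hφstar] at h1
    rw [h1, smul_smul, mul_inv_cancel₀ (hφne (1,X) (y,1) (z,1)), one_smul]
  -- I3 rearranged
  have I3' : β (y,(1:G₂)) (v (1,X) (z,1) : A) * (v (y,1) (z,X) : A)
      = (φ (y,1) (1,X) (z,1))⁻¹ • ((v (y,1) (1,X) : A) * (v (y,X) (z,1) : A)) := by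
    rw [I3, smul_smul, inv_mul_cancel₀ (hφne (y,1) (1,X) (z,1)), one_smul]
  -- scalar bookkeeping
  have hq : φ ((y:G₁),(1:G₂)) (z,1) (1,X) = φ ((1:G₁),X) (y,1) (z,1) := by
    rw [hswap₂₃ (y,1) (1,X) (z,1), hswap₁₂ (1,X) (y,1) (z,1), inv_inv]
  have hr : φ ((y:G₁),(1:G₂)) (1,X) (z,1) = (φ ((1:G₁),X) (y,1) (z,1))⁻¹ :=
    hswap₁₂ (1,X) (y,1) (z,1)
  -- K2 : β_y(ṽ(X,z)) * (ṽ(X,yz))⋆ = φ³ • (ṽ(X,y))⋆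
  have K2 : β (y,(1:G₂)) ((v (1,X) (z,1) : A) * star (v (z,1) (1,X) : A))
      * star ((v (1,X) (y*z,1) : A) * star (v (y*z,1) (1,X) : A))
      = φ ((1:G₁),X) (y,1) (z,1) ^ (3:ℕ)
        • star ((v (1,X) (y,1) : A) * star (v (y,1) (1,X) : A)) := by
    rw [star_mul, star_star, star_mul, star_star]
    rw [I2, hsc1, map_mul, map_star]
    simp only [smul_mul_assoc, mul_smul_comm, smul_smul, mul_assoc, cbs]
    rw [← mul_assoc (β (y,(1:G₂)) (v (1,X) (z,1) : A)), I3']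
    simp only [smul_mul_assoc, smul_smul, mul_assoc, vhat_aux_cancel₂]
    rw [hq, hr, inv_inv]
    ring_nf
  -- switch β_X β_y to β_y β_X
  have hswitch : ∀ a : A, β ((1:G₁),X) (β (y,(1:G₂)) a)
      = (v (1,X) (y,1) : A) * (star (v (y,1) (1,X) : A)
        * (β (y,(1:G₂)) (β ((1:G₁),X) a)
          * ((v (y,1) (1,X) : A) * star (v (1,X) (y,1) : A)))) := by
    intro a
    rw [htw (1,X) (y,1) a, htw (y,1) (1,X) a]
    simp only [Prod.mk_mul_mk, one_mul, mul_one]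
    simp only [mul_assoc, vhat_aux_cancel₁, vhat_aux_cancel₂]
  -- unfold the statement
  simp only [hvh, hvt]
  rw [← hβ11 x y, ← map_star (β (x,(1:G₂))), ← map_mul, ← map_mul, ← map_smul]
  refine congrArg _ ?_
  -- core identity
  rw [K1, map_mul]
  simp only [mul_assoc]
  rw [K2]
  simp only [mul_smul_comm]
  rw [hswitch]
  rw [star_mul, star_star]
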